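/- For every integer k ≥ 1, the grid graph P_3 × P_{2k} has exactly 2^{k−1} Hamiltonian cycles; that is, H(3,2k) = 2^{k−1}. In particular the number of Hamiltonian cycles of a 3 × n grid is always a power of 2 when n is even. -/

import Mathlib

/-- The grid graph `P_m × P_n`: vertices are pairs in `Fin m × Fin n`, and two
vertices are adjacent iff they agree in one coordinate and differ by exactly 1
in the other. -/
def gridGraph (m n : ℕ) : SimpleGraph (Fin m × Fin n) where
  Adj a b := (a.1 = b.1 ∧ Nat.dist a.2.1 b.2.1 = 1) ∨ (a.2 = b.2 ∧ Nat.dist a.1.1 b.1.1 = 1)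
  symm := ⟨fun a b h => by
    rcases h with ⟨h1, h2⟩ | ⟨h1, h2⟩
    · exact Or.inl ⟨h1.symm, by rwa [Nat.dist_comm]⟩
    · exact Or.inr ⟨h1.symm, by rwa [Nat.dist_comm]⟩⟩
  loopless := ⟨fun a h => by
    rcases h with ⟨_, h2⟩ | ⟨_, h2⟩ <;> simp [Nat.dist_self] at h2⟩

/-- `E` is (the edge set of) a Hamiltonian cycle of the grid graph `P_m × P_n`:
`E` is a set of edges of the grid graph such that the spanning subgraph with
edge set `E` is connected and every vertex has degree exactly `2`. -/
def IsHamiltonianCycle (m n : ℕ) (E : Set (Sym2 (Fin m × Fin n))) : Prop :=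
  E ⊆ (gridGraph m n).edgeSet ∧
  (SimpleGraph.fromEdgeSet E).Connected ∧
  ∀ v : Fin m × Fin n, ((SimpleGraph.fromEdgeSet E).neighborSet v).ncard = 2

/-- `H(m,n)`: the number of Hamiltonian cycles of the grid graph `P_m × P_n`. -/
noncomputable def numHamCycles (m n : ℕ) : ℕ :=
  {E : Set (Sym2 (Fin m × Fin n)) | IsHamiltonianCycle m n E}.ncard

namespace HamAux
open SimpleGraph
open scoped Classical

variable {n : ℕ}

noncomputable def b2n (p : Prop) : ℕ := if p then 1 else 0

@[simp] lemma b2n_true {p : Prop} (h : p) : b2n p = 1 := if_pos h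
@[simp] lemma b2n_false {p : Prop} (h : ¬ p) : b2n p = 0 := if_neg h

def vtx (a b : ℕ) (ha : a < 3) (hb : b < n) : Fin 3 × Fin n := (⟨a, ha⟩, ⟨b, hb⟩)

def hc (r j : ℕ) (hr : r < 3) (hj : j + 1 < n) : Sym2 (Fin 3 × Fin n) :=
  s((⟨r, hr⟩, ⟨j, Nat.lt_of_succ_lt hj⟩), (⟨r, hr⟩, ⟨j + 1, hj⟩))

def vc (r j : ℕ) (hr : r + 1 < 3) (hj : j < n) : Sym2 (Fin 3 × Fin n) :=
  s((⟨r, Nat.lt_of_succ_lt hr⟩, ⟨j, hj⟩), (⟨r + 1, hr⟩, ⟨j, hj⟩))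

def hedge (E : Set (Sym2 (Fin 3 × Fin n))) (r j : ℕ) : Prop :=
  ∃ (hr : r < 3) (hj : j + 1 < n), hc r j hr hj ∈ E

def vedge (E : Set (Sym2 (Fin 3 × Fin n))) (r j : ℕ) : Prop :=
  ∃ (hr : r + 1 < 3) (hj : j < n), vc r j hr hj ∈ E

lemma dist_eq_one {a b : ℕ} (h : Nat.dist a b = 1) : b = a + 1 ∨ a = b + 1 := by
  simp [Nat.dist] at h; omega

set_option linter.unreachableTactic false in
set_option linter.unnecessarySeqFocus false in
set_option linter.unusedTactic false in
lemma edge_decomp {e : Sym2 (Fin 3 × Fin n)}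
    (he : e ∈ (gridGraph 3 n).edgeSet) :
    (∃ (r j : ℕ) (hr : r < 3) (hj : j + 1 < n), e = hc r j hr hj) ∨
    (∃ (r j : ℕ) (hr : r + 1 < 3) (hj : j < n), e = vc r j hr hj) := by
  induction e using Sym2.inductionOn with
  | hf a b =>
    rw [SimpleGraph.mem_edgeSet] at he
    rcases he with ⟨h1, h2⟩ | ⟨h1, h2⟩
    · rcases dist_eq_one h2 with h | h
      · refine Or.inl ⟨a.1.1, a.2.1, a.1.2, by omega, ?_⟩
        rw [hc]; congr 1 <;> ext <;> simp [h1, h] <;> omega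
      · refine Or.inl ⟨a.1.1, b.2.1, a.1.2, by omega, ?_⟩
        rw [hc, Sym2.eq_swap]; congr 1 <;> ext <;> simp [h1, h] <;> omega
    · rcases dist_eq_one h2 with h | h
      · refine Or.inr ⟨a.1.1, a.2.1, by omega, a.2.2, ?_⟩
        rw [vc]; congr 1 <;> ext <;> simp [h1, h] <;> omega
      · refine Or.inr ⟨b.1.1, a.2.1, by omega, a.2.2, ?_⟩
        rw [vc, Sym2.eq_swap]; congr 1 <;> ext <;> simp [h1, h] <;> omega

variable {E : Set (Sym2 (Fin 3 × Fin n))}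

lemma mem_nbhd (hE : E ⊆ (gridGraph 3 n).edgeSet) (r j : ℕ) (hr : r < 3) (hj : j < n)
    (x : Fin 3 × Fin n) :
    x ∈ (fromEdgeSet E).neighborSet (vtx r j hr hj) ↔
      ((hedge E r (j-1) ∧ 1 ≤ j) ∧ x.1.1 = r ∧ x.2.1 = j-1) ∨
      (hedge E r j ∧ x.1.1 = r ∧ x.2.1 = j+1) ∨
      ((vedge E (r-1) j ∧ 1 ≤ r) ∧ x.1.1 = r-1 ∧ x.2.1 = j) ∨
      (vedge E r j ∧ x.1.1 = r+1 ∧ x.2.1 = j) := by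
  obtain ⟨⟨x1, hx1⟩, ⟨x2, hx2⟩⟩ := x
  dsimp only
  rw [mem_neighborSet, fromEdgeSet_adj]
  constructor
  · rintro ⟨hmem, -⟩
    have hadj := (gridGraph 3 n).mem_edgeSet.1 (hE hmem)
    have H : (r = x1 ∧ (x2 = j+1 ∨ j = x2+1)) ∨ (j = x2 ∧ (x1 = r+1 ∨ r = x1+1)) := by
      rcases hadj with ⟨h1, h2⟩ | ⟨h1, h2⟩
      · refine Or.inl ⟨?_, dist_eq_one (by simpa [vtx] using h2)⟩
        simpa [vtx, Fin.ext_iff] using h1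
      · refine Or.inr ⟨?_, dist_eq_one (by simpa [vtx] using h2)⟩
        simpa [vtx, Fin.ext_iff] using h1
    rcases H with ⟨h1, h | h⟩ | ⟨h1, h | h⟩
    · refine Or.inr (Or.inl ⟨⟨hr, by omega, ?_⟩, by omega, by omega⟩)
      have : hc r j hr (by omega : j + 1 < n) =
          s(vtx r j hr hj, (⟨x1, hx1⟩, ⟨x2, hx2⟩)) := by
        unfold hc vtx; congr 1 <;> ext <;> simp <;> omega
      rw [this]; exact hmem
    · refine Or.inl ⟨⟨⟨hr, by omega, ?_⟩, by omega⟩, by omega, by omega⟩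
      have : hc r (j-1) hr (by omega : (j-1) + 1 < n) =
          s((⟨x1, hx1⟩, ⟨x2, hx2⟩), vtx r j hr hj) := by
        unfold hc vtx; congr 1 <;> ext <;> simp <;> omega
      rw [this, Sym2.eq_swap]; exact hmem
    · refine Or.inr (Or.inr (Or.inr ⟨⟨by omega, hj, ?_⟩, by omega, by omega⟩))
      have : vc r j (by omega : r + 1 < 3) hj =
          s(vtx r j hr hj, (⟨x1, hx1⟩, ⟨x2, hx2⟩)) := by
        unfold vc vtx; congr 1 <;> ext <;> simp <;> omega
      rw [this]; exact hmem
    · refine Or.inr (Or.inr (Or.inl ⟨⟨⟨by omega, hj, ?_⟩, by omega⟩, by omega, by omega⟩))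
      have : vc (r-1) j (by omega : (r-1) + 1 < 3) hj =
          s((⟨x1, hx1⟩, ⟨x2, hx2⟩), vtx r j hr hj) := by
        unfold vc vtx; congr 1 <;> ext <;> simp <;> omega
      rw [this, Sym2.eq_swap]; exact hmem
  · intro hx
    rcases hx with ⟨⟨⟨hr3, hjn, hmem⟩, hj1⟩, e1, e2⟩ | ⟨⟨hr3, hjn, hmem⟩, e1, e2⟩ |
      ⟨⟨⟨hr3, hjn, hmem⟩, hr1⟩, e1, e2⟩ | ⟨⟨hr3, hjn, hmem⟩, e1, e2⟩
    · refine ⟨?_, ?_⟩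
      · have : s(vtx r j hr hj, ((⟨x1, hx1⟩, ⟨x2, hx2⟩) : Fin 3 × Fin n)) =
            hc r (j-1) hr3 hjn := by
          rw [Sym2.eq_swap]; unfold hc vtx; congr 1 <;> ext <;> simp <;> omega
        rw [this]; exact hmem
      · simp only [vtx, ne_eq, Prod.mk.injEq, Fin.mk.injEq]; omega
    · refine ⟨?_, ?_⟩
      · have : s(vtx r j hr hj, ((⟨x1, hx1⟩, ⟨x2, hx2⟩) : Fin 3 × Fin n)) =
            hc r j hr3 hjn := by
          unfold hc vtx; congr 1 <;> ext <;> simp <;> omega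
        rw [this]; exact hmem
      · simp only [vtx, ne_eq, Prod.mk.injEq, Fin.mk.injEq]; omega
    · refine ⟨?_, ?_⟩
      · have : s(vtx r j hr hj, ((⟨x1, hx1⟩, ⟨x2, hx2⟩) : Fin 3 × Fin n)) =
            vc (r-1) j hr3 hjn := by
          rw [Sym2.eq_swap]; unfold vc vtx; congr 1 <;> ext <;> simp <;> omega
        rw [this]; exact hmem
      · simp only [vtx, ne_eq, Prod.mk.injEq, Fin.mk.injEq]; omega
    · refine ⟨?_, ?_⟩
      · have : s(vtx r j hr hj, ((⟨x1, hx1⟩, ⟨x2, hx2⟩) : Fin 3 × Fin n)) =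
            vc r j hr3 hjn := by
          unfold vc vtx; congr 1 <;> ext <;> simp <;> omega
        rw [this]; exact hmem
      · simp only [vtx, ne_eq, Prod.mk.injEq, Fin.mk.injEq]; omega


def slot (p : Prop) (a b : ℕ) : Set (Fin 3 × Fin n) := {x | p ∧ x.1.1 = a ∧ x.2.1 = b}

lemma ncard_slot {p : Prop} {a b : ℕ} (h : p → a < 3 ∧ b < n) :
    (slot p a b : Set (Fin 3 × Fin n)).ncard = b2n p := by
  by_cases hp : p
  · obtain ⟨ha, hb⟩ := h hp
    have heq : (slot p a b : Set (Fin 3 × Fin n)) = {(⟨a, ha⟩, ⟨b, hb⟩)} := by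
      ext ⟨⟨x1, hx1⟩, ⟨x2, hx2⟩⟩
      simp [slot, hp, Prod.ext_iff, Fin.ext_iff]
    rw [heq, Set.ncard_singleton, b2n_true hp]
  · have heq : (slot p a b : Set (Fin 3 × Fin n)) = ∅ := by
      ext x; simp [slot, hp]
    rw [heq, Set.ncard_empty, b2n_false hp]

lemma ncard_nbhd (hE : E ⊆ (gridGraph 3 n).edgeSet) (r j : ℕ) (hr : r < 3) (hj : j < n) :
    ((fromEdgeSet E).neighborSet (vtx r j hr hj)).ncard =
      b2n (hedge E r (j-1) ∧ 1 ≤ j) + b2n (hedge E r j) +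
      b2n (vedge E (r-1) j ∧ 1 ≤ r) + b2n (vedge E r j) := by
  have hU : (fromEdgeSet E).neighborSet (vtx r j hr hj) =
      slot (hedge E r (j-1) ∧ 1 ≤ j) r (j-1) ∪ (slot (hedge E r j) r (j+1) ∪
      (slot (vedge E (r-1) j ∧ 1 ≤ r) (r-1) j ∪ slot (vedge E r j) (r+1) j)) := by
    ext x
    rw [mem_nbhd hE r j hr hj x]
    simp only [Set.mem_union, slot, Set.mem_setOf_eq]
  have hL : hedge E r (j-1) ∧ 1 ≤ j → r < 3 ∧ j - 1 < n := by
    rintro ⟨⟨h1, h2, -⟩, h3⟩; omega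
  have hR : hedge E r j → r < 3 ∧ j + 1 < n := by
    rintro ⟨h1, h2, -⟩; omega
  have hUp : vedge E (r-1) j ∧ 1 ≤ r → r - 1 < 3 ∧ j < n := by
    rintro ⟨⟨h1, h2, -⟩, h3⟩; omega
  have hD : vedge E r j → r + 1 < 3 ∧ j < n := by
    rintro ⟨h1, h2, -⟩; omega
  rw [hU, Set.ncard_union_eq ?d1 (Set.toFinite _) (Set.toFinite _),
      Set.ncard_union_eq ?d2 (Set.toFinite _) (Set.toFinite _),
      Set.ncard_union_eq ?d3 (Set.toFinite _) (Set.toFinite _),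
      ncard_slot hL, ncard_slot hR, ncard_slot hUp, ncard_slot hD]
  · ring
  case d1 =>
    rw [Set.disjoint_left]
    rintro x ⟨⟨-, hg⟩, e1, e2⟩ (⟨-, f1, f2⟩ | ⟨⟨-, hg'⟩, f1, f2⟩ | ⟨-, f1, f2⟩) <;> omega
  case d2 =>
    rw [Set.disjoint_left]
    rintro x ⟨-, e1, e2⟩ (⟨⟨-, hg'⟩, f1, f2⟩ | ⟨-, f1, f2⟩) <;> omega
  case d3 =>
    rw [Set.disjoint_left]
    rintro x ⟨⟨-, hg⟩, e1, e2⟩ ⟨-, f1, f2⟩; omega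



lemma hc_inj {r j r' j' : ℕ} {hr hj hr' hj'} :
    (hc r j hr hj : Sym2 (Fin 3 × Fin n)) = hc r' j' hr' hj' ↔ (r = r' ∧ j = j') := by
  constructor
  · intro h
    rw [hc, hc, Sym2.eq_iff] at h
    rcases h with ⟨h1, h2⟩ | ⟨h1, h2⟩ <;>
      simp only [Prod.mk.injEq, Fin.mk.injEq] at h1 h2 <;> omega
  · rintro ⟨rfl, rfl⟩; rfl

lemma vc_inj {r j r' j' : ℕ} {hr hj hr' hj'} :
    (vc r j hr hj : Sym2 (Fin 3 × Fin n)) = vc r' j' hr' hj' ↔ (r = r' ∧ j = j') := by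
  constructor
  · intro h
    rw [vc, vc, Sym2.eq_iff] at h
    rcases h with ⟨h1, h2⟩ | ⟨h1, h2⟩ <;>
      simp only [Prod.mk.injEq, Fin.mk.injEq] at h1 h2 <;> omega
  · rintro ⟨rfl, rfl⟩; rfl

lemma hc_ne_vc {r j r' j' : ℕ} {hr hj hr' hj'} :
    (hc r j hr hj : Sym2 (Fin 3 × Fin n)) ≠ vc r' j' hr' hj' := by
  intro h
  rw [hc, vc, Sym2.eq_iff] at h
  rcases h with ⟨h1, h2⟩ | ⟨h1, h2⟩ <;>
    simp only [Prod.mk.injEq, Fin.mk.injEq] at h1 h2 <;> omega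

lemma hc_mem_edgeSet {r j : ℕ} (hr : r < 3) (hj : j + 1 < n) :
    (hc r j hr hj : Sym2 (Fin 3 × Fin n)) ∈ (gridGraph 3 n).edgeSet := by
  rw [hc, SimpleGraph.mem_edgeSet]
  exact Or.inl ⟨rfl, by simp [Nat.dist]⟩

lemma vc_mem_edgeSet {r j : ℕ} (hr : r + 1 < 3) (hj : j < n) :
    (vc r j hr hj : Sym2 (Fin 3 × Fin n)) ∈ (gridGraph 3 n).edgeSet := by
  rw [vc, SimpleGraph.mem_edgeSet]
  exact Or.inr ⟨rfl, by simp [Nat.dist]⟩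

/-- whether the horizontal edge at row `r`, interface `j` belongs to the snake cycle -/
def HOK (c : ℕ → Bool) (r j : ℕ) : Prop :=
  if j % 2 = 0 then r = 0 ∨ r = 2 else (r = 1 ∨ (if c (j / 2) then r = 0 else r = 2))

/-- whether the vertical edge at rows `r,r+1`, column `j` belongs to the snake cycle -/
def VOK (n : ℕ) (c : ℕ → Bool) (r j : ℕ) : Prop :=
  if j = 0 ∨ j = n - 1 then True else (if c ((j - 1) / 2) then r = 1 else r = 0)

/-- the snake cycle with choices `c` -/
def Ec (n : ℕ) (c : ℕ → Bool) : Set (Sym2 (Fin 3 × Fin n)) :=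
  {e | (∃ (r j : ℕ) (hr : r < 3) (hj : j + 1 < n), HOK c r j ∧ e = hc r j hr hj) ∨
       (∃ (r j : ℕ) (hr : r + 1 < 3) (hj : j < n), VOK n c r j ∧ e = vc r j hr hj)}

lemma Ec_subset (c : ℕ → Bool) : Ec n c ⊆ (gridGraph 3 n).edgeSet := by
  rintro e (⟨r, j, hr, hj, -, rfl⟩ | ⟨r, j, hr, hj, -, rfl⟩)
  · exact hc_mem_edgeSet hr hj
  · exact vc_mem_edgeSet hr hj

lemma hedge_Ec {c : ℕ → Bool} {r j : ℕ} :
    hedge (Ec n c) r j ↔ (r < 3 ∧ j + 1 < n ∧ HOK c r j) := by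
  constructor
  · rintro ⟨hr, hj, hmem⟩
    rcases hmem with ⟨r', j', hr', hj', hok, he⟩ | ⟨r', j', hr', hj', hok, he⟩
    · obtain ⟨rfl, rfl⟩ := hc_inj.1 he
      exact ⟨hr, hj, hok⟩
    · exact absurd he hc_ne_vc
  · rintro ⟨hr, hj, hok⟩
    exact ⟨hr, hj, Or.inl ⟨r, j, hr, hj, hok, rfl⟩⟩

lemma vedge_Ec {c : ℕ → Bool} {r j : ℕ} :
    vedge (Ec n c) r j ↔ (r + 1 < 3 ∧ j < n ∧ VOK n c r j) := by
  constructor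
  · rintro ⟨hr, hj, hmem⟩
    rcases hmem with ⟨r', j', hr', hj', hok, he⟩ | ⟨r', j', hr', hj', hok, he⟩
    · exact absurd he.symm hc_ne_vc
    · obtain ⟨rfl, rfl⟩ := vc_inj.1 he
      exact ⟨hr, hj, hok⟩
  · rintro ⟨hr, hj, hok⟩
    exact ⟨hr, hj, Or.inr ⟨r, j, hr, hj, hok, rfl⟩⟩



set_option maxHeartbeats 1000000 in
lemma Ec_degree {k : ℕ} (hk : 1 ≤ k) (hn : n = 2 * k) (c : ℕ → Bool) (v : Fin 3 × Fin n) :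
    ((fromEdgeSet (Ec n c)).neighborSet v).ncard = 2 := by
  obtain ⟨⟨r, hr⟩, ⟨j, hj⟩⟩ := v
  rw [show ((⟨r, hr⟩, ⟨j, hj⟩) : Fin 3 × Fin n) = vtx r j hr hj from rfl,
    ncard_nbhd (Ec_subset c) r j hr hj]
  simp only [hedge_Ec, vedge_Ec, HOK, VOK]
  subst hn
  by_cases hpar : j % 2 = 0
  · unfold b2n
    split_ifs <;> first | omega | (simp only [and_true] at *; omega)
  · have hq : (j - 1) / 2 = j / 2 := by omega
    simp only [hq]
    unfold b2n
    split_ifs <;> first | omega | (simp only [and_true] at *; omega)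



lemma adj_h {c : ℕ → Bool} {r j : ℕ} (hr : r < 3) (hj : j + 1 < n) (hok : HOK c r j) :
    (fromEdgeSet (Ec n c)).Adj (vtx r j hr (Nat.lt_of_succ_lt hj)) (vtx r (j+1) hr hj) := by
  rw [fromEdgeSet_adj]
  refine ⟨Or.inl ⟨r, j, hr, hj, hok, rfl⟩, ?_⟩
  simp [vtx, Prod.ext_iff, Fin.ext_iff]

lemma adj_v {c : ℕ → Bool} {r j : ℕ} (hr : r + 1 < 3) (hj : j < n) (hok : VOK n c r j) :
    (fromEdgeSet (Ec n c)).Adj (vtx r j (Nat.lt_of_succ_lt hr) hj) (vtx (r+1) j hr hj) := by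
  rw [fromEdgeSet_adj]
  refine ⟨Or.inr ⟨r, j, hr, hj, hok, rfl⟩, ?_⟩
  simp [vtx, Prod.ext_iff, Fin.ext_iff]

lemma VOK_or {k : ℕ} (hk : 1 ≤ k) (hn : n = 2 * k) (c : ℕ → Bool) (j : ℕ) :
    VOK n c 0 j ∨ VOK n c 1 j := by
  unfold VOK
  split_ifs with h1 h2 <;> simp

lemma reach_zero {k : ℕ} (hk : 1 ≤ k) (hn : n = 2 * k) (c : ℕ → Bool) :
    ∀ (j : ℕ) (hj : j < n) (r : ℕ) (hr : r < 3),
      (fromEdgeSet (Ec n c)).Reachable (vtx r j hr hj) (vtx 0 0 (by omega) (by omega)) := by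
  intro j
  induction j with
  | zero =>
    intro hj r hr
    have h01 : VOK n c 0 0 := by unfold VOK; simp
    have h12 : VOK n c 1 0 := by unfold VOK; simp
    have a01 := adj_v (n := n) (c := c) (r := 0) (by omega) hj h01
    have a12 := adj_v (n := n) (c := c) (r := 1) (by omega) hj h12
    interval_cases r
    · rfl
    · exact a01.symm.reachable
    · exact (a12.symm.reachable).trans a01.symm.reachable
  | succ j ih =>
    intro hj r hr
    have hjn : j < n := by omega
    -- reach for any row with a crossing at interface j
    have cross : ∀ (r' : ℕ) (hr' : r' < 3), HOK c r' j →
        (fromEdgeSet (Ec n c)).Reachable (vtx r' (j+1) hr' hj) (vtx 0 0 (by omega) (by omega)) := by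
      intro r' hr' hok
      exact ((adj_h hr' hj hok).symm.reachable).trans (ih hjn r' hr')
    -- verticals in column j+1 connecting row 1
    have vert : ∀ (r' : ℕ) (hr' : r' + 1 < 3), VOK n c r' (j+1) →
        (fromEdgeSet (Ec n c)).Reachable (vtx r' (j+1) (by omega) hj) (vtx (r'+1) (j+1) hr' hj) :=
      fun r' hr' hok => (adj_v hr' hj hok).reachable
    by_cases hpar : j % 2 = 0
    · have hok0 : HOK c 0 j := by unfold HOK; simp [hpar]
      have hok2 : HOK c 2 j := by unfold HOK; simp [hpar]
      interval_cases r
      · exact cross 0 (by omega) hok0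
      · rcases VOK_or hk hn c (j+1) with h | h
        · exact ((vert 0 (by omega) h).symm).trans (cross 0 (by omega) hok0)
        · exact (vert 1 (by omega) h).trans (cross 2 (by omega) hok2)
      · exact cross 2 (by omega) hok2
    · have hok1 : HOK c 1 j := by unfold HOK; simp [hpar]
      by_cases hcv : c (j / 2)
      · have hok0 : HOK c 0 j := by unfold HOK; simp [hpar, hcv]
        interval_cases r
        · exact cross 0 (by omega) hok0
        · exact cross 1 (by omega) hok1
        · -- row 2 via vertical (1,2) in column j+1
          have hv : VOK n c 1 (j+1) := by
            have hq : (j + 1 - 1) / 2 = j / 2 := by omega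
            unfold VOK; rw [hq]; simp [hcv]
          exact ((vert 1 (by omega) hv).symm).trans (cross 1 (by omega) hok1)
      · have hok2 : HOK c 2 j := by unfold HOK; simp [hpar, hcv]
        interval_cases r
        · -- row 0 via vertical (0,1) in column j+1
          have hv : VOK n c 0 (j+1) := by
            have hq : (j + 1 - 1) / 2 = j / 2 := by omega
            unfold VOK; rw [hq]; simp [hcv]
          exact (vert 0 (by omega) hv).trans (cross 1 (by omega) hok1)
        · exact cross 1 (by omega) hok1
        · exact cross 2 (by omega) hok2

lemma Ec_connected {k : ℕ} (hk : 1 ≤ k) (hn : n = 2 * k) (c : ℕ → Bool) :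
    (fromEdgeSet (Ec n c)).Connected := by
  rw [SimpleGraph.connected_iff]
  constructor
  · intro u v
    obtain ⟨⟨ru, hru⟩, ⟨ju, hju⟩⟩ := u
    obtain ⟨⟨rv, hrv⟩, ⟨jv, hjv⟩⟩ := v
    exact (reach_zero hk hn c ju hju ru hru).trans (reach_zero hk hn c jv hjv rv hrv).symm
  · exact ⟨(⟨0, by omega⟩, ⟨0, by omega⟩)⟩



lemma walk_crossing (hE : E ⊆ (gridGraph 3 n).edgeSet) {j : ℕ} (hj : j + 1 < n)
    {u v : Fin 3 × Fin n} (w : (fromEdgeSet E).Walk u v)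
    (hu : u.2.1 ≤ j) (hv : j < v.2.1) :
    hedge E 0 j ∨ hedge E 1 j ∨ hedge E 2 j := by
  induction w with
  | nil => omega
  | @cons a x b h w ih =>
    by_cases hx : x.2.1 ≤ j
    · exact ih hx hv
    · -- the edge a-x crosses interface j
      rw [fromEdgeSet_adj] at h
      obtain ⟨hmem, -⟩ := h
      have hadj := (gridGraph 3 n).mem_edgeSet.1 (hE hmem)
      obtain ⟨⟨r, hr⟩, ⟨ja, hja⟩⟩ := a
      obtain ⟨⟨rx, hrx⟩, ⟨jx, hjx⟩⟩ := x
      have H : (r = rx ∧ (jx = ja+1 ∨ ja = jx+1)) ∨ (ja = jx ∧ (rx = r+1 ∨ r = rx+1)) := by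
        rcases hadj with ⟨h1, h2⟩ | ⟨h1, h2⟩
        · exact Or.inl ⟨by simpa [Fin.ext_iff] using h1, dist_eq_one (by simpa using h2)⟩
        · exact Or.inr ⟨by simpa [Fin.ext_iff] using h1, dist_eq_one (by simpa using h2)⟩
      simp only at hu hx
      rcases H with ⟨h1, h2 | h2⟩ | ⟨h1, -⟩
      · -- jx = ja + 1, so ja = j
        have hja' : ja = j := by omega
        have hhe : hedge E r j := by
          refine ⟨hr, hj, ?_⟩
          have : hc r j hr hj = s((⟨r, hr⟩, ⟨ja, hja⟩), (⟨rx, hrx⟩, ⟨jx, hjx⟩)) := by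
            unfold hc; congr 1 <;> ext <;> simp <;> omega
          rw [this]; exact hmem
        interval_cases r
        · exact Or.inl hhe
        · exact Or.inr (Or.inl hhe)
        · exact Or.inr (Or.inr hhe)
      · omega
      · omega

lemma cut_crossing (hE : E ⊆ (gridGraph 3 n).edgeSet)
    (hconn : (fromEdgeSet E).Connected) {j : ℕ} (hj : j + 1 < n) :
    hedge E 0 j ∨ hedge E 1 j ∨ hedge E 2 j := by
  have h := hconn.preconnected (vtx 0 0 (by omega) (by omega)) (vtx 0 (j+1) (by omega) hj)
  obtain ⟨w⟩ := h
  exact walk_crossing hE hj w (by simp [vtx]) (by simp [vtx])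



set_option maxHeartbeats 2000000 in
lemma interfaces {k : ℕ} (hk : 1 ≤ k) (hn : n = 2 * k)
    (hE : E ⊆ (gridGraph 3 n).edgeSet)
    (hdeg : ∀ v, ((fromEdgeSet E).neighborSet v).ncard = 2)
    (hconn : (fromEdgeSet E).Connected) :
    ∀ j, j + 1 < n →
      (j % 2 = 0 → (hedge E 0 j ∧ ¬ hedge E 1 j ∧ hedge E 2 j)) ∧
      (j % 2 = 1 → (hedge E 1 j ∧ (hedge E 0 j ↔ ¬ hedge E 2 j))) := by
  have deg : ∀ (r j : ℕ), r < 3 → j < n →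
      b2n (hedge E r (j-1) ∧ 1 ≤ j) + b2n (hedge E r j) +
      b2n (vedge E (r-1) j ∧ 1 ≤ r) + b2n (vedge E r j) = 2 := by
    intro r j hr hj
    rw [← ncard_nbhd hE r j hr hj]; exact hdeg _
  have V2 : ∀ j, ¬ vedge E 2 j := by rintro j ⟨h, -⟩; omega
  intro j
  induction j using Nat.strong_induction_on with
  | _ j ih =>
    intro hj
    rcases Nat.eq_zero_or_pos j with rfl | hj0
    · -- column 0
      refine ⟨fun _ => ?_, fun hpar => by omega⟩
      have d0 := deg 0 0 (by omega) (by omega)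
      have d1 := deg 1 0 (by omega) (by omega)
      have d2 := deg 2 0 (by omega) (by omega)
      have nV2 := V2 0
      clear ih deg V2
      by_cases a : hedge E 0 0 <;> by_cases b : hedge E 1 0 <;> by_cases c2 : hedge E 2 0 <;>
        by_cases p : vedge E 0 0 <;> by_cases q : vedge E 1 0 <;>
        simp_all [b2n]
    · -- j ≥ 1 : use IH at j - 1
      have hIH := ih (j-1) (by omega) (by omega)
      have d0 := deg 0 j (by omega) (by omega)
      have d1 := deg 1 j (by omega) (by omega)
      have d2 := deg 2 j (by omega) (by omega)
      have nV2 := V2 j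
      have h1j : 1 ≤ j := hj0
      by_cases hpar : j % 2 = 0
      · -- j even ≥ 2, previous interface odd
        refine ⟨fun _ => ?_, fun h => by omega⟩
        obtain ⟨M1, Miff⟩ := hIH.2 (by omega)
        clear ih deg V2 hIH
        by_cases a : hedge E 0 j <;> by_cases b : hedge E 1 j <;>
          by_cases c2 : hedge E 2 j <;> by_cases p : vedge E 0 j <;>
          by_cases q : vedge E 1 j <;> by_cases a' : hedge E 0 (j-1) <;>
          by_cases c2' : hedge E 2 (j-1) <;>
          simp_all [b2n] <;> omega
      · -- j odd, previous interface even
        refine ⟨fun h => by omega, fun _ => ?_⟩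
        obtain ⟨L0, L1, L2⟩ := hIH.1 (by omega)
        have hcut := cut_crossing hE hconn (j := j) (by omega)
        clear ih deg V2 hIH
        by_cases a : hedge E 0 j <;> by_cases b : hedge E 1 j <;>
          by_cases c2 : hedge E 2 j <;> by_cases p : vedge E 0 j <;>
          by_cases q : vedge E 1 j <;>
          simp_all [b2n] <;> omega



section Classify

variable {k : ℕ} (hk : 1 ≤ k) (hn : n = 2 * k) (hE : E ⊆ (gridGraph 3 n).edgeSet)
  (hdeg : ∀ v, ((fromEdgeSet E).neighborSet v).ncard = 2)
  (hconn : (fromEdgeSet E).Connected)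

include hk hn hE hdeg hconn

set_option maxHeartbeats 2000000 in
lemma verticals :
    (vedge E 0 0 ∧ vedge E 1 0) ∧ (vedge E 0 (n-1) ∧ vedge E 1 (n-1)) ∧
    (∀ j, 0 < j → j + 1 < n →
      ((vedge E 0 j ↔ ¬ hedge E 0 (2*((j-1)/2)+1)) ∧
       (vedge E 1 j ↔ hedge E 0 (2*((j-1)/2)+1)))) := by
  have hfaces := interfaces hk hn hE hdeg hconn
  have deg : ∀ (r j : ℕ), r < 3 → j < n →
      b2n (hedge E r (j-1) ∧ 1 ≤ j) + b2n (hedge E r j) +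
      b2n (vedge E (r-1) j ∧ 1 ≤ r) + b2n (vedge E r j) = 2 := by
    intro r j hr hj
    rw [← ncard_nbhd hE r j hr hj]; exact hdeg _
  have V2 : ∀ j, ¬ vedge E 2 j := by rintro j ⟨h, -⟩; omega
  have HB : ∀ r, ¬ hedge E r (n-1) := by rintro r ⟨-, h, -⟩; omega
  refine ⟨?_, ?_, ?_⟩
  · obtain ⟨h0, h1, h2⟩ := (hfaces 0 (by omega)).1 (by omega)
    have d0 := deg 0 0 (by omega) (by omega)
    have d2 := deg 2 0 (by omega) (by omega)
    have nV2 := V2 0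
    clear deg V2 hfaces HB
    by_cases p : vedge E 0 0 <;> by_cases q : vedge E 1 0 <;> simp_all [b2n]
  · obtain ⟨h0, h1, h2⟩ := (hfaces (n-2) (by omega)).1 (by omega)
    have d0 := deg 0 (n-1) (by omega) (by omega)
    have d2 := deg 2 (n-1) (by omega) (by omega)
    have nV2 := V2 (n-1)
    have hb0 := HB 0
    have hb2 := HB 2
    have he : n - 1 - 1 = n - 2 := by omega
    have h1n : 1 ≤ n - 1 := by omega
    rw [he] at d0 d2
    clear deg V2 hfaces HB
    by_cases p : vedge E 0 (n-1) <;> by_cases q : vedge E 1 (n-1) <;>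
      simp_all [b2n]
  · intro j hj0 hjn
    have h1j : 1 ≤ j := hj0
    have d0 := deg 0 j (by omega) (by omega)
    have d2 := deg 2 j (by omega) (by omega)
    have nV2 := V2 j
    by_cases hpar : j % 2 = 0
    · -- even middle column: adjacent odd interface is j - 1
      have ht : 2*((j-1)/2)+1 = j - 1 := by omega
      obtain ⟨M1, Miff⟩ := (hfaces (j-1) (by omega)).2 (by omega)
      obtain ⟨R0, R1, R2⟩ := (hfaces j (by omega)).1 (by omega)
      rw [ht]
      clear deg V2 hfaces HB
      by_cases p : vedge E 0 j <;> by_cases q : vedge E 1 j <;>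
        by_cases a' : hedge E 0 (j-1) <;> by_cases c2' : hedge E 2 (j-1) <;>
        simp_all [b2n] <;> omega
    · -- odd middle column: adjacent odd interface is j itself
      have ht : 2*((j-1)/2)+1 = j := by omega
      obtain ⟨L0, L1, L2⟩ := (hfaces (j-1) (by omega)).1 (by omega)
      obtain ⟨M1, Miff⟩ := (hfaces j (by omega)).2 (by omega)
      rw [ht]
      clear deg V2 hfaces HB
      by_cases p : vedge E 0 j <;> by_cases q : vedge E 1 j <;>
        by_cases a : hedge E 0 j <;> by_cases c2 : hedge E 2 j <;>
        simp_all [b2n] <;> omega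


noncomputable def cOf (E : Set (Sym2 (Fin 3 × Fin n))) : ℕ → Bool :=
  fun i => if hedge E 0 (2*i+1) then true else false

omit hk hn hE hdeg hconn in
lemma cOf_iff {i : ℕ} : cOf E i = true ↔ hedge E 0 (2*i+1) := by
  unfold cOf; split_ifs with h <;> simp [h]

set_option maxHeartbeats 1000000 in
lemma hedge_iff_HOK : ∀ r j, hedge E r j ↔ (r < 3 ∧ j + 1 < n ∧ HOK (cOf E) r j) := by
  have hfaces := interfaces hk hn hE hdeg hconn
  intro r j
  by_cases hb : r < 3 ∧ j + 1 < n
  · obtain ⟨hr, hj⟩ := hb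
    by_cases hpar : j % 2 = 0
    · obtain ⟨h0, h1, h2⟩ := (hfaces j hj).1 hpar
      unfold HOK; rw [if_pos hpar]
      interval_cases r <;> simp_all
    · obtain ⟨h1', hiff⟩ := (hfaces j hj).2 (by omega)
      unfold HOK; rw [if_neg hpar]
      have hq : 2*(j/2)+1 = j := by omega
      have hc0 : cOf E (j/2) = true ↔ hedge E 0 j := by rw [cOf_iff, hq]
      interval_cases r
      · by_cases hcv : cOf E (j/2) <;> simp_all
      · simp_all
      · by_cases hcv : cOf E (j/2) <;> simp_all <;> tauto
  · constructor
    · rintro ⟨hr, hj, -⟩; exact absurd ⟨hr, hj⟩ hb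
    · rintro ⟨hr, hj, -⟩; exact absurd ⟨hr, hj⟩ hb

set_option maxHeartbeats 1000000 in
lemma vedge_iff_VOK : ∀ r j, vedge E r j ↔ (r + 1 < 3 ∧ j < n ∧ VOK n (cOf E) r j) := by
  have hverts := verticals hk hn hE hdeg hconn
  intro r j
  by_cases hb : r + 1 < 3 ∧ j < n
  · obtain ⟨hr, hj⟩ := hb
    unfold VOK
    by_cases hb2 : j = 0 ∨ j = n - 1
    · rw [if_pos hb2]
      obtain ⟨⟨v00, v10⟩, ⟨v0l, v1l⟩, -⟩ := hverts
      have hr2 : r < 2 := by omega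
      rcases hb2 with rfl | rfl <;> interval_cases r <;> simp_all
    · rw [if_neg hb2]
      have hmid := hverts.2.2 j (by omega) (by omega)
      have hc0 : cOf E ((j-1)/2) = true ↔ hedge E 0 (2*((j-1)/2)+1) := cOf_iff
      have hr2 : r < 2 := by omega
      by_cases hcv : cOf E ((j-1)/2) <;> interval_cases r <;> simp_all
  · constructor
    · rintro ⟨hr, hj, -⟩; exact absurd ⟨hr, hj⟩ hb
    · rintro ⟨hr, hj, -⟩; exact absurd ⟨hr, hj⟩ hb

lemma E_eq_Ec : E = Ec n (cOf E) := by
  have hh := hedge_iff_HOK hk hn hE hdeg hconn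
  have hv := vedge_iff_VOK hk hn hE hdeg hconn
  ext e
  constructor
  · intro he'
    rcases edge_decomp (hE he') with ⟨r, j, hr, hj, rfl⟩ | ⟨r, j, hr, hj, rfl⟩
    · exact Or.inl ⟨r, j, hr, hj, ((hh r j).1 ⟨hr, hj, he'⟩).2.2, rfl⟩
    · exact Or.inr ⟨r, j, hr, hj, ((hv r j).1 ⟨hr, hj, he'⟩).2.2, rfl⟩
  · rintro (⟨r, j, hr, hj, hok, rfl⟩ | ⟨r, j, hr, hj, hok, rfl⟩)
    · obtain ⟨hr', hj', hmem⟩ := (hh r j).2 ⟨hr, hj, hok⟩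
      exact hmem
    · obtain ⟨hr', hj', hmem⟩ := (hv r j).2 ⟨hr, hj, hok⟩
      exact hmem

end Classify


variable {k : ℕ}

lemma HOK_congr {c c' : ℕ → Bool} (hn : n = 2 * k) (hcc : ∀ i, i < k - 1 → c i = c' i)
    {r j : ℕ} (hj : j + 1 < n) : HOK c r j ↔ HOK c' r j := by
  unfold HOK
  by_cases hpar : j % 2 = 0
  · simp [hpar]
  · have := hcc (j / 2) (by omega)
    simp [hpar, this]

lemma VOK_congr {c c' : ℕ → Bool} (hn : n = 2 * k) (hcc : ∀ i, i < k - 1 → c i = c' i)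
    {r j : ℕ} (hj : j < n) : VOK n c r j ↔ VOK n c' r j := by
  unfold VOK
  by_cases hb : j = 0 ∨ j = n - 1
  · simp [hb]
  · have := hcc ((j - 1) / 2) (by omega)
    simp [hb, this]

lemma Ec_congr {c c' : ℕ → Bool} (hn : n = 2 * k) (hcc : ∀ i, i < k - 1 → c i = c' i) :
    Ec n c = Ec n c' := by
  ext e
  constructor
  · rintro (⟨r, j, hr, hj, hok, rfl⟩ | ⟨r, j, hr, hj, hok, rfl⟩)
    · exact Or.inl ⟨r, j, hr, hj, (HOK_congr hn hcc hj).1 hok, rfl⟩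
    · exact Or.inr ⟨r, j, hr, hj, (VOK_congr hn hcc hj).1 hok, rfl⟩
  · rintro (⟨r, j, hr, hj, hok, rfl⟩ | ⟨r, j, hr, hj, hok, rfl⟩)
    · exact Or.inl ⟨r, j, hr, hj, (HOK_congr hn hcc hj).2 hok, rfl⟩
    · exact Or.inr ⟨r, j, hr, hj, (VOK_congr hn hcc hj).2 hok, rfl⟩

/-- extension of a finitely-supported choice function -/
def ext' (k : ℕ) (c : Fin (k-1) → Bool) : ℕ → Bool :=
  fun i => if h : i < k - 1 then c ⟨i, h⟩ else false

lemma Ec_ext_inj (hk : 1 ≤ k) (hn : n = 2 * k) :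
    Function.Injective (fun c : Fin (k-1) → Bool => Ec n (ext' k c)) := by
  intro c c' h
  funext i
  obtain ⟨i, hi⟩ := i
  have hji : 2 * i + 1 + 1 < n := by omega
  have h1 : hedge (Ec n (ext' k c)) 0 (2*i+1) ↔ hedge (Ec n (ext' k c')) 0 (2*i+1) := by
    simp only at h
    rw [h]
  rw [hedge_Ec, hedge_Ec] at h1
  have e1 : ∀ (d : Fin (k-1) → Bool), HOK (ext' k d) 0 (2*i+1) ↔ d ⟨i, hi⟩ = true := by
    intro d
    unfold HOK
    have hpar : ¬((2*i+1) % 2 = 0) := by omega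
    rw [if_neg hpar]
    have hq : (2*i+1) / 2 = i := by omega
    rw [hq]
    unfold ext'
    rw [dif_pos hi]
    rcases Bool.eq_false_or_eq_true (d ⟨i, hi⟩) with hb | hb <;> simp [hb]
  rcases Bool.eq_false_or_eq_true (c ⟨i, hi⟩) with hb | hb <;>
  rcases Bool.eq_false_or_eq_true (c' ⟨i, hi⟩) with hb' | hb' <;>
    simp_all [e1]

lemma ham_set_eq {P : Set (Sym2 (Fin 3 × Fin n)) → Prop} (hk : 1 ≤ k) (hn : n = 2 * k)
    (hHam : ∀ (E : Set (Sym2 (Fin 3 × Fin n))),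
      (E ⊆ (gridGraph 3 n).edgeSet ∧ (fromEdgeSet E).Connected ∧
        ∀ v, ((fromEdgeSet E).neighborSet v).ncard = 2) ↔ P E)
    : {E : Set (Sym2 (Fin 3 × Fin n)) | P E} =
      Set.range (fun c : Fin (k-1) → Bool => Ec n (ext' k c)) := by
  ext E
  rw [Set.mem_setOf_eq, ← hHam E]
  constructor
  · rintro ⟨hE, hconn, hdeg⟩
    refine ⟨fun i => cOf E i.1, ?_⟩
    have h1 := E_eq_Ec hk hn hE hdeg hconn
    simp only
    rw [Ec_congr hn (c := ext' k (fun i => cOf E i.1)) (c' := cOf E) ?_, ← h1]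
    intro i hi
    simp [ext', hi]
  · rintro ⟨c, rfl⟩
    exact ⟨Ec_subset _, Ec_connected hk hn _, Ec_degree hk hn _⟩

end HamAux


/-- For every integer `k ≥ 1`, the grid graph `P_3 × P_{2k}` has exactly
`2^(k-1)` Hamiltonian cycles: `H(3, 2k) = 2^(k-1)`. -/
theorem H_three_even : ∀ k : ℕ, 1 ≤ k → numHamCycles 3 (2 * k) = 2 ^ (k - 1) := by
  intro k hk
  unfold numHamCycles
  rw [HamAux.ham_set_eq (P := IsHamiltonianCycle 3 (2*k)) hk rfl (fun E => Iff.rfl)]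
  rw [← Set.image_univ, Set.ncard_image_of_injective _ (HamAux.Ec_ext_inj hk rfl),
    Set.ncard_univ]
  simp [Nat.card_eq_fintype_card]
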